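/- Let Q be a symmetric traceless real 3×3 matrix and let s ∈ ℝ. If |Q|² = 2s²/3 and det Q = 2s³/27, then Q is uniaxial with scalar order parameter s, i.e., there exists a unit vector n ∈ S² such that Q = s(n⊗n − (1/3)I). -/

import Mathlib

open Matrix

lemma six_sq_zero (u1 u2 u3 u4 u5 u6 : ℝ)
    (h : u1^2 + u2^2 + u3^2 + 2*u4^2 + 2*u5^2 + 2*u6^2 = 0) :
    u1 = 0 ∧ u2 = 0 ∧ u3 = 0 ∧ u4 = 0 ∧ u5 = 0 ∧ u6 = 0 := by
  refine ⟨?_, ?_, ?_, ?_, ?_, ?_⟩ <;>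
    nlinarith [sq_nonneg u1, sq_nonneg u2, sq_nonneg u3, sq_nonneg u4, sq_nonneg u5, sq_nonneg u6]

lemma key_uniaxial (s a b c d e f : ℝ) (hs : s ≠ 0) (hT : a + b + c = 0)
    (h1 : (a+s/3)^2 + d^2 + e^2 = s*(a+s/3))
    (h2 : d^2 + (b+s/3)^2 + f^2 = s*(b+s/3))
    (h3 : e^2 + f^2 + (c+s/3)^2 = s*(c+s/3))
    (h23 : d*e + (b+s/3)*f + f*(c+s/3) = s*f)
    (hpos : 0 < (a+s/3)/s) :
    ∃ x y z : ℝ, x^2+y^2+z^2 = 1 ∧ s*(x*x) = a+s/3 ∧ s*(x*y) = d ∧ s*(x*z) = e ∧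
      s*(y*y) = b+s/3 ∧ s*(y*z) = f ∧ s*(z*z) = c+s/3 := by
  have hd2 : d^2 = (a+s/3)*(b+s/3) := by
    linear_combination (1/2)*(h1+h2-h3) + (1/2)*(-s/3 + c - b - a)*hT
  have he2 : e^2 = (a+s/3)*(c+s/3) := by
    linear_combination (1/2)*(h1+h3-h2) + (1/2)*(-s/3 - c + b - a)*hT
  have hde : d*e = (a+s/3)*f := by
    linear_combination h23 - f*hT
  have hA0 : a + s/3 ≠ 0 := by
    intro h; rw [h] at hpos; simp at hpos
  set x := Real.sqrt ((a+s/3)/s) with hxdef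
  have hx2 : x^2 = (a+s/3)/s := Real.sq_sqrt hpos.le
  have hx : x ≠ 0 := (Real.sqrt_pos.mpr hpos).ne'
  have hsx : s * (x*x) = a + s/3 := by
    have h : x*x = x^2 := (sq x).symm
    rw [h, hx2]; field_simp
  have hsx2 : (s*x)*(s*x) = s*(a+s/3) := by linear_combination s*hsx
  have hsA : s*(a+s/3) ≠ 0 := mul_ne_zero hs hA0
  have hyy : s * ((d/(s*x))*(d/(s*x))) = b + s/3 := by
    rw [div_mul_div_comm, hsx2, ← mul_div_assoc, div_eq_iff hsA]
    linear_combination s*hd2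
  have hzz : s * ((e/(s*x))*(e/(s*x))) = c + s/3 := by
    rw [div_mul_div_comm, hsx2, ← mul_div_assoc, div_eq_iff hsA]
    linear_combination s*he2
  have hyz : s * ((d/(s*x))*(e/(s*x))) = f := by
    rw [div_mul_div_comm, hsx2, ← mul_div_assoc, div_eq_iff hsA]
    linear_combination s*hde
  have hxy : s * (x*(d/(s*x))) = d := by field_simp
  have hxz : s * (x*(e/(s*x))) = e := by field_simp
  refine ⟨x, d/(s*x), e/(s*x), ?_, hsx, hxy, hxz, hyy, hyz, hzz⟩
  have hsum : s * (x^2+(d/(s*x))^2+(e/(s*x))^2) = s * 1 := by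
    linear_combination hsx + hyy + hzz + hT
  exact mul_left_cancel₀ hs hsum

theorem uniaxial_of_invariants (Q : Matrix (Fin 3) (Fin 3) ℝ)
    (hsymm : Q.IsSymm) (htr : Q.trace = 0) (s : ℝ)
    (hnorm : (Qᵀ * Q).trace = 2 * s ^ 2 / 3) (hdet : Q.det = 2 * s ^ 3 / 27) :
    ∃ n : Fin 3 → ℝ, n ⬝ᵥ n = 1 ∧ Q = s • (vecMulVec n n - (3:ℝ)⁻¹ • 1) := by
  have hs10 : Q 1 0 = Q 0 1 := hsymm.apply 0 1
  have hs20 : Q 2 0 = Q 0 2 := hsymm.apply 0 2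
  have hs21 : Q 2 1 = Q 1 2 := hsymm.apply 1 2
  have htr' : Q 0 0 + Q 1 1 + Q 2 2 = 0 := by
    simpa [Matrix.trace, Fin.sum_univ_three] using htr
  rw [Matrix.det_fin_three] at hdet
  simp only [Matrix.trace, Matrix.diag, Matrix.mul_apply, Fin.sum_univ_three,
    Matrix.transpose_apply, Finset.sum_apply] at hnorm
  rw [hs10, hs20, hs21] at hnorm hdet
  by_cases hs : s = 0
  · subst hs
    norm_num at hnorm
    have hsq : (Q 0 0)^2 + (Q 1 1)^2 + (Q 2 2)^2 + 2*(Q 0 1)^2 + 2*(Q 0 2)^2 + 2*(Q 1 2)^2 = 0 := by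
      linear_combination hnorm
    obtain ⟨h00, h11, h22, h01, h02, h12⟩ := six_sq_zero _ _ _ _ _ _ hsq
    refine ⟨![1, 0, 0], by simp, ?_⟩
    ext i j
    fin_cases i <;> fin_cases j <;>
      simp [h00, h11, h22, h01, h02, h12, hs10, hs20, hs21]
  · -- the six quadratic relations
    have hbig : ((Q 0 0+s/3)^2 + (Q 0 1)^2 + (Q 0 2)^2 - s*(Q 0 0+s/3))^2
        + ((Q 0 1)^2 + (Q 1 1+s/3)^2 + (Q 1 2)^2 - s*(Q 1 1+s/3))^2
        + ((Q 0 2)^2 + (Q 1 2)^2 + (Q 2 2+s/3)^2 - s*(Q 2 2+s/3))^2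
        + 2*((Q 0 0+s/3)*(Q 0 1) + (Q 0 1)*(Q 1 1+s/3) + (Q 0 2)*(Q 1 2) - s*(Q 0 1))^2
        + 2*((Q 0 0+s/3)*(Q 0 2) + (Q 0 1)*(Q 1 2) + (Q 0 2)*(Q 2 2+s/3) - s*(Q 0 2))^2
        + 2*((Q 0 1)*(Q 0 2) + (Q 1 1+s/3)*(Q 1 2) + (Q 1 2)*(Q 2 2+s/3) - s*(Q 1 2))^2 = 0 := by
      linear_combination
        ((4/27)*s^3 + (-2)*(Q 1 2)^2*s + (-2)*(Q 0 2)^2*s + (8)*(Q 0 1)*(Q 0 2)*(Q 1 2) + (-2)*(Q 0 1)^2*s + (1/3)*(Q 2 2)*s^2 + (1)*(Q 2 2)*(Q 1 2)^2 + (1)*(Q 2 2)*(Q 0 2)^2 + (-3)*(Q 2 2)*(Q 0 1)^2 + (-2/3)*(Q 2 2)^2*s + (1/3)*(Q 1 1)*s^2 + (1)*(Q 1 1)*(Q 1 2)^2 + (-3)*(Q 1 1)*(Q 0 2)^2 + (1)*(Q 1 1)*(Q 0 1)^2 + (2/3)*(Q 1 1)*(Q 2 2)*s + (-1)*(Q 1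 1)*(Q 2 2)^2 + (-2/3)*(Q 1 1)^2*s + (-1)*(Q 1 1)^2*(Q 2 2) + (-1/3)*(Q 0 0)*s^2 + (-1)*(Q 0 0)*(Q 1 2)^2 + (3)*(Q 0 0)*(Q 0 2)^2 + (3)*(Q 0 0)*(Q 0 1)^2 + (2/3)*(Q 0 0)*(Q 2 2)*s + (2/3)*(Q 0 0)*(Q 1 1)*s + (1)*(Q 0 0)*(Q 1 1)*(Q 2 2) + (-2/3)*(Q 0 0)^2*s + (-1)*(Q 0 0)^2*(Q 2 2) + (-1)*(Q 0 0)^2*(Q 1 1) + (1)*(Q 0 0)^3) * htr'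
        + ((1)*(Q 1 2)^2 + (1)*(Q 0 2)^2 + (1)*(Q 0 1)^2 + (1)*(Q 2 2)^2 + (1)*(Q 1 1)*(Q 2 2) + (1)*(Q 1 1)^2) * hnorm
        + (-2*s) * hdet
    obtain ⟨hE1, hE2, hE3, hE12, hE13, hE23⟩ := six_sq_zero _ _ _ _ _ _ hbig
    have hsum3 : (Q 0 0+s/3)/s + (Q 1 1+s/3)/s + (Q 2 2+s/3)/s = 1 := by
      field_simp
      linarith [htr']
    have hcase : 0 < (Q 0 0+s/3)/s ∨ 0 < (Q 1 1+s/3)/s ∨ 0 < (Q 2 2+s/3)/s := by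
      by_contra hcon
      push_neg at hcon
      linarith [hcon.1, hcon.2.1, hcon.2.2]
    rcases hcase with hp | hp | hp
    · obtain ⟨x, y, z, hxyz, p1, p2, p3, p4, p5, p6⟩ :=
        key_uniaxial s (Q 0 0) (Q 1 1) (Q 2 2) (Q 0 1) (Q 0 2) (Q 1 2) hs htr'
          (by linear_combination hE1) (by linear_combination hE2) (by linear_combination hE3)
          (by linear_combination hE23) hp
      refine ⟨![x, y, z], by simp [dotProduct, Fin.sum_univ_three]; linear_combination hxyz, ?_⟩
      ext i j
      fin_cases i <;> fin_cases j <;>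
        simp [vecMulVec_apply, Matrix.sub_apply, Matrix.smul_apply, Matrix.one_apply]
      · linear_combination -p1
      · linear_combination -p2
      · linear_combination -p3
      · linear_combination hs10 - p2
      · linear_combination -p4
      · linear_combination -p5
      · linear_combination hs20 - p3
      · linear_combination hs21 - p5
      · linear_combination -p6
    · obtain ⟨x, y, z, hxyz, p1, p2, p3, p4, p5, p6⟩ :=
        key_uniaxial s (Q 1 1) (Q 0 0) (Q 2 2) (Q 0 1) (Q 1 2) (Q 0 2) hs
          (by linarith [htr'])
          (by linear_combination hE2) (by linear_combination hE1) (by linear_combination hE3)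
          (by linear_combination hE13) hp
      refine ⟨![y, x, z], by simp [dotProduct, Fin.sum_univ_three]; linear_combination hxyz, ?_⟩
      ext i j
      fin_cases i <;> fin_cases j <;>
        simp [vecMulVec_apply, Matrix.sub_apply, Matrix.smul_apply, Matrix.one_apply]
      · linear_combination -p4
      · linear_combination -p2
      · linear_combination -p5
      · linear_combination hs10 - p2
      · linear_combination -p1
      · linear_combination -p3
      · linear_combination hs20 - p5
      · linear_combination hs21 - p3
      · linear_combination -p6
    · obtain ⟨x, y, z, hxyz, p1, p2, p3, p4, p5, p6⟩ :=
        key_uniaxial s (Q 2 2) (Q 0 0) (Q 1 1) (Q 0 2) (Q 1 2) (Q 0 1) hs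
          (by linarith [htr'])
          (by linear_combination hE3) (by linear_combination hE1) (by linear_combination hE2)
          (by linear_combination hE12) hp
      refine ⟨![y, z, x], by simp [dotProduct, Fin.sum_univ_three]; linear_combination hxyz, ?_⟩
      ext i j
      fin_cases i <;> fin_cases j <;>
        simp [vecMulVec_apply, Matrix.sub_apply, Matrix.smul_apply, Matrix.one_apply]
      · linear_combination -p4
      · linear_combination -p5
      · linear_combination -p2
      · linear_combination hs10 - p5
      · linear_combination -p6
      · linear_combination -p3
      · linear_combination hs20 - p2
      · linear_combination hs21 - p3
      · linear_combination -p1
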